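/- Let R^f be a scoring mediator where f is continuous and there exist α, β > 0 with αx ≤ f(x) ≤ βx for all x ∈ [0,1]. Then R^f is not u^{Ac}-learnable: some authors game with mediator R^f and action-targeted utility contains an improvement cycle. -/

import Mathlib

open Finset

noncomputable section

/-- Highest quality of a document on topic `k` under profile `a`:
`B_k(a) = max_j Q_{j,k} · 1[a_j = k]` (with value `0` when the max is over an empty set). -/
def hiQ {n m : ℕ} (Q : Fin n → Fin m → ℝ) (k : Fin m) (a : Fin n → Fin m) : ℝ :=
  Finset.univ.fold max 0 (fun j => if a j = k then Q j k else 0)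

/-- Number of authors writing on topic `k` with the highest quality `B_k(a)`. -/
def numTop {n m : ℕ} (Q : Fin n → Fin m → ℝ) (k : Fin m) (a : Fin n → Fin m) : ℕ :=
  (Finset.univ.filter (fun j => a j = k ∧ Q j k = hiQ Q k a)).card

/-- The PRP mediator: first-rank probability of author `j` on topic `k` under profile `a`. -/
def prp {n m : ℕ} (Q : Fin n → Fin m → ℝ) (k : Fin m) (a : Fin n → Fin m) (j : Fin n) : ℝ :=
  if a j = k ∧ Q j k = hiQ Q k a then 1 / (numTop Q k a : ℝ) else 0

/-- Exposure-targeted utility under the PRP mediator. -/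
def uEx {n m : ℕ} (D : Fin m → ℝ) (Q : Fin n → Fin m → ℝ) (a : Fin n → Fin m) (j : Fin n) : ℝ :=
  D (a j) * prp Q (a j) a j

/-- Action-targeted utility under the PRP mediator. -/
def uAc {n m : ℕ} (D : Fin m → ℝ) (Q : Fin n → Fin m → ℝ) (a : Fin n → Fin m) (j : Fin n) : ℝ :=
  D (a j) * prp Q (a j) a j * Q j (a j)

/-- `b` is obtained from `a` by a unilateral deviation of author `p` strictly
increasing her utility (an improvement step). -/
def ImpStep {n m : ℕ} (u : (Fin n → Fin m) → Fin n → ℝ)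
    (a b : Fin n → Fin m) (p : Fin n) : Prop :=
  (∀ i, i ≠ p → b i = a i) ∧ b p ≠ a p ∧ u a p < u b p

/-- `γ` is an improvement path: each consecutive pair of profiles is an improvement step. -/
def IsImpPath {n m l : ℕ} (u : (Fin n → Fin m) → Fin n → ℝ)
    (γ : Fin (l + 1) → Fin n → Fin m) : Prop :=
  ∀ r : Fin l, ∃ p, ImpStep u (γ r.castSucc) (γ r.succ) p

/-- `W_k(γ)`: the minimum of `H_k` over all profiles in the finite path `γ`. -/
def minTop {n m l : ℕ} (Q : Fin n → Fin m → ℝ) (k : Fin m)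
    (γ : Fin (l + 1) → Fin n → Fin m) : ℕ :=
  Finset.univ.inf' Finset.univ_nonempty (fun r => numTop Q k (γ r))

/-- `S_k(γ)`: the maximum of `B_k` over all profiles in the finite path `γ`. -/
def maxQ {n m l : ℕ} (Q : Fin n → Fin m → ℝ) (k : Fin m)
    (γ : Fin (l + 1) → Fin n → Fin m) : ℝ :=
  Finset.univ.sup' Finset.univ_nonempty (fun r => hiQ Q k (γ r))

/-- A scoring mediator with scoring function `f`: author `j` writing on topic `k`
gets first-rank probability `f(Q_{j,k}) / Σ_{i : a_i = k} f(Q_{i,k})`. -/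
def scoreMed {n m : ℕ} (f : ℝ → ℝ) (Q : Fin n → Fin m → ℝ) (k : Fin m)
    (a : Fin n → Fin m) (j : Fin n) : ℝ :=
  if a j = k then
    f (Q j k) / (∑ i ∈ Finset.univ.filter (fun i => a i = k), f (Q i k))
  else 0

/-- Exposure-targeted utility under the scoring mediator `R^f`. -/
def uExScore {n m : ℕ} (f : ℝ → ℝ) (D : Fin m → ℝ) (Q : Fin n → Fin m → ℝ)
    (a : Fin n → Fin m) (j : Fin n) : ℝ :=
  D (a j) * scoreMed f Q (a j) a j

/-- Action-targeted utility under the scoring mediator `R^f`. -/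
def uAcScore {n m : ℕ} (f : ℝ → ℝ) (D : Fin m → ℝ) (Q : Fin n → Fin m → ℝ)
    (a : Fin n → Fin m) (j : Fin n) : ℝ :=
  D (a j) * scoreMed f Q (a j) a j * Q j (a j)

/-- A scoring mediator `R^f` with `f` continuous and linearly bounded
(`αx ≤ f(x) ≤ βx` on `[0,1]` for some `α, β > 0`) is not `u^{Ac}`-learnable:
some authors game with mediator `R^f` and action-targeted utility contains an
improvement cycle. -/

private def WP : Fin 7 → Fin 4 → Fin 3 :=
  ![![1,0,0,2], ![2,0,0,2], ![2,0,2,2], ![2,1,2,2], ![1,1,2,2], ![1,1,0,2], ![1,0,0,2]]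

private def QM (x y u v : ℝ) : Fin 4 → Fin 3 → ℝ :=
  ![![x,x,y], ![u,u,u], ![v,v,v], ![y,y,y]]

private def DM (p q r : ℝ) : Fin 3 → ℝ := ![p,q,r]

private lemma QM01 (x y u v : ℝ) : QM x y u v 0 1 = x := rfl
private lemma QM02 (x y u v : ℝ) : QM x y u v 0 2 = y := rfl
private lemma QM10 (x y u v : ℝ) : QM x y u v 1 0 = u := rfl
private lemma QM11 (x y u v : ℝ) : QM x y u v 1 1 = u := rfl
private lemma QM20 (x y u v : ℝ) : QM x y u v 2 0 = v := rfl
private lemma QM22 (x y u v : ℝ) : QM x y u v 2 2 = v := rfl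
private lemma QM32 (x y u v : ℝ) : QM x y u v 3 2 = y := rfl
private lemma DM0 (p q r : ℝ) : DM p q r 0 = p := rfl
private lemma DM1 (p q r : ℝ) : DM p q r 1 = q := rfl
private lemma DM2 (p q r : ℝ) : DM p q r 2 = r := rfl

set_option maxHeartbeats 2000000 in
theorem stmt17 (f : ℝ → ℝ) (hcont : Continuous f) (α β : ℝ)
    (hα : 0 < α) (hβ : 0 < β)
    (hbound : ∀ x ∈ Set.Icc (0:ℝ) 1, α * x ≤ f x ∧ f x ≤ β * x) :
    ∃ (n m l : ℕ) (D : Fin m → ℝ) (Q : Fin n → Fin m → ℝ)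
      (γ : Fin (l + 1) → Fin n → Fin m),
      0 < l ∧ (∀ k, 0 ≤ D k) ∧ (∑ k, D k = 1) ∧
      (∀ j k, Q j k ∈ Set.Icc (0:ℝ) 1) ∧
      IsImpPath (uAcScore f D Q) γ ∧ γ (Fin.last l) = γ 0 := by

  classical
  -- basic facts about f
  have hf0 : f 0 = 0 := by
    have h := hbound 0 ⟨le_refl 0, zero_le_one⟩
    have h1 : α * 0 ≤ f 0 := h.1
    have h2 : f 0 ≤ β * 0 := h.2
    nlinarith
  have hf1pos : 0 < f 1 := by
    have h := (hbound 1 ⟨zero_le_one, le_refl 1⟩).1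
    nlinarith
  have hf1ne : f 1 ≠ 0 := ne_of_gt hf1pos
  -- IVT points
  obtain ⟨a1, ha1mem, hfa1⟩ : ∃ x ∈ Set.Icc (0:ℝ) 1, f x = f 1 / 2 := by
    have h := intermediate_value_Icc (zero_le_one) hcont.continuousOn
    have hmem : f 1 / 2 ∈ Set.Icc (f 0) (f 1) := by
      rw [hf0]; exact ⟨by linarith, by linarith⟩
    obtain ⟨x, hx, hfx⟩ := h hmem
    exact ⟨x, hx, hfx⟩
  have ha1_0 : 0 ≤ a1 := ha1mem.1
  have ha1_1 : a1 ≤ 1 := ha1mem.2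
  have ha1pos : 0 < a1 := by
    have h := (hbound a1 ha1mem).2
    nlinarith
  obtain ⟨a2, ha2mem, hfa2⟩ : ∃ x ∈ Set.Icc (0:ℝ) a1, f x = f 1 / 20 := by
    have h := intermediate_value_Icc ha1_0 hcont.continuousOn
    have hmem : f 1 / 20 ∈ Set.Icc (f 0) (f a1) := by
      rw [hf0, hfa1]; exact ⟨by linarith, by linarith⟩
    obtain ⟨x, hx, hfx⟩ := h hmem
    exact ⟨x, hx, hfx⟩
  have ha2_0 : 0 ≤ a2 := ha2mem.1
  have ha2a1 : a2 ≤ a1 := ha2mem.2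
  have ha2pos : 0 < a2 := by
    have h := (hbound a2 ⟨ha2_0, le_trans ha2a1 ha1_1⟩).2
    nlinarith
  -- the tuning constant
  obtain ⟨c, hc_def⟩ : ∃ x : ℝ, x = a2 / (101 * a1) := ⟨_, rfl⟩
  have hcpos : 0 < c := by
    rw [hc_def]; exact div_pos ha2pos (by nlinarith)
  have hc : 101 * (a1 * c) = a2 := by
    rw [hc_def]; field_simp
  have hc101 : 101 * c ≤ 1 := by nlinarith
  have hcfpos : 0 < c * f 1 := mul_pos hcpos hf1pos
  -- points for authors B and C
  obtain ⟨qB, hqBmem, hfqB⟩ : ∃ x ∈ Set.Icc (0:ℝ) 1, f x = 2 * c * f 1 := by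
    have h := intermediate_value_Icc (zero_le_one) hcont.continuousOn
    have hmem : 2 * c * f 1 ∈ Set.Icc (f 0) (f 1) := by
      rw [hf0]
      constructor
      · nlinarith
      · nlinarith
    obtain ⟨x, hx, hfx⟩ := h hmem
    exact ⟨x, hx, hfx⟩
  obtain ⟨qC, hqCmem, hfqC⟩ : ∃ x ∈ Set.Icc (0:ℝ) 1, f x = c * f 1 := by
    have h := intermediate_value_Icc (zero_le_one) hcont.continuousOn
    have hmem : c * f 1 ∈ Set.Icc (f 0) (f 1) := by
      rw [hf0]
      constructor
      · nlinarith
      · nlinarith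
    obtain ⟨x, hx, hfx⟩ := h hmem
    exact ⟨x, hx, hfx⟩
  have hqBpos : 0 < qB := by
    have h := (hbound qB hqBmem).2
    nlinarith
  have hqCpos : 0 < qC := by
    have h := (hbound qC hqCmem).2
    nlinarith
  -- demand weights
  obtain ⟨d2, hd2_def⟩ : ∃ x : ℝ, x = 2 * (a1 / a2) + 1 / 20 := ⟨_, rfl⟩
  have hd2pos : 0 < d2 := by
    rw [hd2_def]
    have := div_pos ha1pos ha2pos
    linarith
  have hd2 : d2 * a2 = 2 * a1 + a2 / 20 := by
    rw [hd2_def]; field_simp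
  have hdc : d2 * c * (101 * a1) = 2 * a1 + a2 / 20 := by
    rw [hd2_def, hc_def]; field_simp
  obtain ⟨S, hS_def⟩ : ∃ x : ℝ, x = 1 / 2 + 1 + d2 := ⟨_, rfl⟩
  have hSpos : 0 < S := by rw [hS_def]; linarith
  have hSne : S ≠ 0 := ne_of_gt hSpos
  -- handy positivity facts
  have h110c : (0:ℝ) < 1 / 10 + c := by linarith
  have h12c : (0:ℝ) < 1 / 2 + 2 * c := by linarith
  have h120c : (0:ℝ) < c + 1 / 20 := by linarith
  -- the witness game
  refine ⟨4, 3, 6, DM ((1/2)/S) (1/S) (d2/S), QM a1 a2 qB qC, WP,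
    by norm_num, ?_, ?_, ?_, ?_, ?_⟩
  · -- 0 ≤ D k
    intro k
    fin_cases k
    · show (0:ℝ) ≤ (1/2)/S
      exact div_nonneg (by norm_num) hSpos.le
    · show (0:ℝ) ≤ 1/S
      exact div_nonneg (by norm_num) hSpos.le
    · show (0:ℝ) ≤ d2/S
      exact div_nonneg hd2pos.le hSpos.le
  · -- sum D = 1
    rw [Fin.sum_univ_three, DM0, DM1, DM2, ← add_div, ← add_div,
      div_eq_one_iff_eq hSne, hS_def]
  · -- Q j k ∈ Icc 0 1
    intro j k
    fin_cases j <;> fin_cases k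
    · exact Set.mem_Icc.mpr ⟨ha1_0, ha1_1⟩
    · exact Set.mem_Icc.mpr ⟨ha1_0, ha1_1⟩
    · exact Set.mem_Icc.mpr ⟨ha2_0, le_trans ha2a1 ha1_1⟩
    · exact Set.mem_Icc.mpr ⟨hqBpos.le, hqBmem.2⟩
    · exact Set.mem_Icc.mpr ⟨hqBpos.le, hqBmem.2⟩
    · exact Set.mem_Icc.mpr ⟨hqBpos.le, hqBmem.2⟩
    · exact Set.mem_Icc.mpr ⟨hqCpos.le, hqCmem.2⟩
    · exact Set.mem_Icc.mpr ⟨hqCpos.le, hqCmem.2⟩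
    · exact Set.mem_Icc.mpr ⟨hqCpos.le, hqCmem.2⟩
    · exact Set.mem_Icc.mpr ⟨ha2_0, le_trans ha2a1 ha1_1⟩
    · exact Set.mem_Icc.mpr ⟨ha2_0, le_trans ha2a1 ha1_1⟩
    · exact Set.mem_Icc.mpr ⟨ha2_0, le_trans ha2a1 ha1_1⟩
  · -- the improvement path
    intro r
    fin_cases r
    · -- step 1 : author 0 moves 1 → 2
      show ∃ p, ImpStep (uAcScore f (DM ((1/2)/S) (1/S) (d2/S)) (QM a1 a2 qB qC)) (WP 0) (WP 1) p
      refine ⟨0, by decide, by decide, ?_⟩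
      simp only [uAcScore, scoreMed, show WP 0 0 = (1:Fin 3) from rfl,
        show WP 1 0 = (2:Fin 3) from rfl, eq_self_iff_true, if_true]
      rw [show Finset.univ.filter (fun i => WP 0 i = 1) = ({0} : Finset (Fin 4)) from by decide,
        show Finset.univ.filter (fun i => WP 1 i = 2) = ({0,3} : Finset (Fin 4)) from by decide,
        Finset.sum_singleton, Finset.sum_insert (by decide), Finset.sum_singleton]
      simp only [QM01, QM02, QM32, DM1, DM2]
      rw [hfa1, hfa2]
      rw [div_self (by linarith : f 1 / 2 ≠ 0)]
      rw [show f 1/20/(f 1/20 + f 1/20) = 1/2 from by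
        rw [div_eq_iff (by linarith : f 1/20 + f 1/20 ≠ 0)]; ring]
      rw [show (1:ℝ)/S * 1 * a1 = a1/S from by ring,
        show d2/S * (1/2) * a2 = (d2*a2)/(2*S) from by ring,
        div_lt_div_iff₀ hSpos (by linarith)]
      nlinarith [hd2, mul_pos ha2pos hSpos]
    · -- step 2 : author 2 moves 0 → 2
      show ∃ p, ImpStep (uAcScore f (DM ((1/2)/S) (1/S) (d2/S)) (QM a1 a2 qB qC)) (WP 1) (WP 2) p
      refine ⟨2, by decide, by decide, ?_⟩
      simp only [uAcScore, scoreMed, show WP 1 2 = (0:Fin 3) from rfl,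
        show WP 2 2 = (2:Fin 3) from rfl, eq_self_iff_true, if_true]
      rw [show Finset.univ.filter (fun i => WP 1 i = 0) = ({1,2} : Finset (Fin 4)) from by decide,
        show Finset.univ.filter (fun i => WP 2 i = 2) = ({0,2,3} : Finset (Fin 4)) from by decide,
        Finset.sum_insert (by decide), Finset.sum_singleton,
        Finset.sum_insert (by decide), Finset.sum_insert (by decide), Finset.sum_singleton]
      simp only [QM10, QM20, QM02, QM22, QM32, DM0, DM2]
      rw [hfqB, hfqC, hfa2]
      rw [show (2*c*f 1 + c*f 1) = 3*(c*f 1) from by ring,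
        show (f 1/20 + (c*f 1 + f 1/20)) = (1/10 + c)*f 1 from by ring]
      rw [show (1:ℝ)/2/S * (c*f 1/(3*(c*f 1))) * qC = qC/(6*S) from by
          field_simp; ring,
        show d2/S * (c*f 1/((1/10 + c)*f 1)) * qC = (d2*c*qC)/(S*(1/10+c)) from by
          field_simp,
        div_lt_div_iff₀ (by positivity) (mul_pos hSpos h110c)]
      have key2 : 1/10 + c < 6*(d2*c) := by nlinarith [hdc, hc, ha2a1, ha1pos, ha2pos]
      nlinarith [mul_lt_mul_of_pos_left key2 (mul_pos hqCpos hSpos)]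
    · -- step 3 : author 1 moves 0 → 1
      show ∃ p, ImpStep (uAcScore f (DM ((1/2)/S) (1/S) (d2/S)) (QM a1 a2 qB qC)) (WP 2) (WP 3) p
      refine ⟨1, by decide, by decide, ?_⟩
      simp only [uAcScore, scoreMed, show WP 2 1 = (0:Fin 3) from rfl,
        show WP 3 1 = (1:Fin 3) from rfl, eq_self_iff_true, if_true]
      rw [show Finset.univ.filter (fun i => WP 2 i = 0) = ({1} : Finset (Fin 4)) from by decide,
        show Finset.univ.filter (fun i => WP 3 i = 1) = ({1} : Finset (Fin 4)) from by decide,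
        Finset.sum_singleton, Finset.sum_singleton]
      simp only [QM10, QM11, DM0, DM1]
      have hfqBne : f qB ≠ 0 := by rw [hfqB]; nlinarith
      rw [div_self hfqBne]
      rw [show (1:ℝ)/2/S * 1 * qB = qB/(2*S) from by ring,
        show (1:ℝ)/S * 1 * qB = qB/S from by ring,
        div_lt_div_iff₀ (by linarith) hSpos]
      nlinarith [mul_pos hqBpos hSpos]
    · -- step 4 : author 0 moves 2 → 1
      show ∃ p, ImpStep (uAcScore f (DM ((1/2)/S) (1/S) (d2/S)) (QM a1 a2 qB qC)) (WP 3) (WP 4) p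
      refine ⟨0, by decide, by decide, ?_⟩
      simp only [uAcScore, scoreMed, show WP 3 0 = (2:Fin 3) from rfl,
        show WP 4 0 = (1:Fin 3) from rfl, eq_self_iff_true, if_true]
      rw [show Finset.univ.filter (fun i => WP 3 i = 2) = ({0,2,3} : Finset (Fin 4)) from by decide,
        show Finset.univ.filter (fun i => WP 4 i = 1) = ({0,1} : Finset (Fin 4)) from by decide,
        Finset.sum_insert (by decide), Finset.sum_insert (by decide), Finset.sum_singleton,
        Finset.sum_insert (by decide), Finset.sum_singleton]
      simp only [QM01, QM02, QM11, QM22, QM32, DM1, DM2]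
      rw [hfa1, hfa2, hfqB, hfqC]
      rw [show (f 1/20 + (c*f 1 + f 1/20)) = (1/10 + c)*f 1 from by ring,
        show (f 1/2 + 2*c*f 1) = (1/2 + 2*c)*f 1 from by ring]
      rw [show d2/S * (f 1/20/((1/10 + c)*f 1)) * a2 = (d2*a2)/(20*(S*(1/10+c))) from by
          field_simp,
        show (1:ℝ)/S * (f 1/2/((1/2 + 2*c)*f 1)) * a1 = a1/(2*(S*(1/2+2*c))) from by
          field_simp,
        div_lt_div_iff₀ (by positivity) (by positivity)]
      have ha2c : a2 * c ≤ a2 * (1/101) := by nlinarith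
      have key4 : d2*a2*(1+4*c) < a1*(2 + 20*c) := by
        nlinarith [hd2, hc, ha2a1, ha2pos, ha1pos, hcpos, ha2c]
      nlinarith [mul_lt_mul_of_pos_left key4 hSpos]
    · -- step 5 : author 2 moves 2 → 0
      show ∃ p, ImpStep (uAcScore f (DM ((1/2)/S) (1/S) (d2/S)) (QM a1 a2 qB qC)) (WP 4) (WP 5) p
      refine ⟨2, by decide, by decide, ?_⟩
      simp only [uAcScore, scoreMed, show WP 4 2 = (2:Fin 3) from rfl,
        show WP 5 2 = (0:Fin 3) from rfl, eq_self_iff_true, if_true]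
      rw [show Finset.univ.filter (fun i => WP 4 i = 2) = ({2,3} : Finset (Fin 4)) from by decide,
        show Finset.univ.filter (fun i => WP 5 i = 0) = ({2} : Finset (Fin 4)) from by decide,
        Finset.sum_insert (by decide), Finset.sum_singleton, Finset.sum_singleton]
      simp only [QM20, QM22, QM32, DM0, DM2]
      rw [hfqC, hfa2]
      have hfqCne : c * f 1 ≠ 0 := ne_of_gt hcfpos
      rw [div_self hfqCne]
      rw [show (c*f 1 + f 1/20) = (c + 1/20)*f 1 from by ring]
      rw [show d2/S * (c*f 1/((c + 1/20)*f 1)) * qC = (d2*c*qC)/(S*(c+1/20)) from by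
          field_simp,
        show (1:ℝ)/2/S * 1 * qC = qC/(2*S) from by ring,
        div_lt_div_iff₀ (mul_pos hSpos h120c) (by positivity)]
      have key5 : 2*(d2*c) < c + 1/20 := by
        nlinarith [hdc, hc, ha1pos, ha2pos, ha2a1]
      nlinarith [mul_lt_mul_of_pos_left key5 (mul_pos hqCpos hSpos)]
    · -- step 6 : author 1 moves 1 → 0
      show ∃ p, ImpStep (uAcScore f (DM ((1/2)/S) (1/S) (d2/S)) (QM a1 a2 qB qC)) (WP 5) (WP 6) p
      refine ⟨1, by decide, by decide, ?_⟩
      simp only [uAcScore, scoreMed, show WP 5 1 = (1:Fin 3) from rfl,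
        show WP 6 1 = (0:Fin 3) from rfl, eq_self_iff_true, if_true]
      rw [show Finset.univ.filter (fun i => WP 5 i = 1) = ({0,1} : Finset (Fin 4)) from by decide,
        show Finset.univ.filter (fun i => WP 6 i = 0) = ({1,2} : Finset (Fin 4)) from by decide,
        Finset.sum_insert (by decide), Finset.sum_singleton,
        Finset.sum_insert (by decide), Finset.sum_singleton]
      simp only [QM01, QM10, QM11, QM20, DM0, DM1]
      rw [hfa1, hfqB, hfqC]
      rw [show (f 1/2 + 2*c*f 1) = (1/2 + 2*c)*f 1 from by ring,
        show (2*c*f 1 + c*f 1) = 3*(c*f 1) from by ring]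
      rw [show (1:ℝ)/S * (2*c*f 1/((1/2 + 2*c)*f 1)) * qB = (2*c*qB)/(S*(1/2+2*c)) from by
          field_simp,
        show (1:ℝ)/2/S * (2*c*f 1/(3*(c*f 1))) * qB = qB/(3*S) from by
          field_simp,
        div_lt_div_iff₀ (mul_pos hSpos h12c) (by positivity)]
      nlinarith [mul_pos (mul_pos hqBpos hSpos) hcpos, mul_pos hqBpos hSpos, hc101,
        mul_le_mul_of_nonneg_left hc101 (mul_pos hqBpos hSpos).le]
  · -- cycle closes
    show WP (Fin.last 6) = WP 0
    decide
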